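/- Let (e_i) be an unconditional and democratic Schauder basis of a Banach space X. Then for every ε > 0 there is an equivalent norm on X with respect to which (e_i) is normalized, 1-unconditional and (1+ε)-democratic. -/

import Mathlib

open scoped BigOperators

section CommonDefs

variable {X : Type*} [NormedAddCommGroup X] [NormedSpace ℝ X]

/-- `(e, coord)` is a Schauder basis of `X` with biorthogonal functionals `coord`:
the functionals are biorthogonal to the basis vectors and every `x` is the limit of the
partial sums of its expansion `Σ coord i x • e i`. -/
structure IsSchauderBasis (e : ℕ → X) (coord : ℕ → X →L[ℝ] ℝ) : Prop where
  biorth : ∀ i j, coord i (e j) = if i = j then 1 else 0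
  expansion : ∀ x : X,
    Filter.Tendsto (fun n => ∑ i ∈ Finset.range n, coord i x • e i)
      Filter.atTop (nhds x)

/-- The best `m`-term approximation error `σ_m(x)` w.r.t. the norm `nn`. -/
noncomputable def bestApprox (e : ℕ → X) (nn : X → ℝ) (m : ℕ) (x : X) : ℝ :=
  sInf { r | ∃ (A : Finset ℕ) (a : ℕ → ℝ), A.card ≤ m ∧
    r = nn (x - ∑ i ∈ A, a i • e i) }

/-- `A` is a set of coordinates of `x` of largest modulus (a greedy set):
the `m`-th greedy approximant of `x` is `∑ i ∈ A, coord i x • e i` for a greedy set of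
cardinality `m`. -/
def GreedySet (coord : ℕ → X →L[ℝ] ℝ) (x : X) (A : Finset ℕ) : Prop :=
  ∀ i ∈ A, ∀ j ∉ A, |coord j x| ≤ |coord i x|

/-- The basis `(e, coord)` is `C`-greedy w.r.t. the norm `nn`:
`‖x - G_m(x)‖ ≤ C σ_m(x)` for every `x` and `m` (for any choice of `m`-th greedy
approximant `G_m(x)`). -/
def IsGreedyWith (e : ℕ → X) (coord : ℕ → X →L[ℝ] ℝ) (nn : X → ℝ) (C : ℝ) : Prop :=
  ∀ (x : X) (m : ℕ) (A : Finset ℕ), A.card = m → GreedySet coord x A →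
    nn (x - ∑ i ∈ A, coord i x • e i) ≤ C * bestApprox e nn m x

/-- Suppression `K`-unconditionality w.r.t. the norm `nn`. -/
def IsSuppressionUnconditionalWith (e : ℕ → X) (nn : X → ℝ) (K : ℝ) : Prop :=
  ∀ (s A : Finset ℕ) (a : ℕ → ℝ), A ⊆ s →
    nn (∑ i ∈ A, a i • e i) ≤ K * nn (∑ i ∈ s, a i • e i)

/-- `K`-unconditionality w.r.t. the norm `nn`. -/
def IsUnconditionalWith (e : ℕ → X) (nn : X → ℝ) (K : ℝ) : Prop :=
  ∀ (s : Finset ℕ) (a b : ℕ → ℝ), (∀ i, |a i| ≤ |b i|) →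
    nn (∑ i ∈ s, a i • e i) ≤ K * nn (∑ i ∈ s, b i • e i)

/-- `Δ`-democracy w.r.t. the norm `nn`. -/
def IsDemocraticWith (e : ℕ → X) (nn : X → ℝ) (Δ : ℝ) : Prop :=
  ∀ A B : Finset ℕ, A.card ≤ B.card →
    nn (∑ i ∈ A, e i) ≤ Δ * nn (∑ i ∈ B, e i)

/-- The basis is normalized w.r.t. the norm `nn`. -/
def IsNormalizedWith (e : ℕ → X) (nn : X → ℝ) : Prop :=
  ∀ i, nn (e i) = 1

/-- The basis is seminormalized. -/
def IsSeminormalized (e : ℕ → X) : Prop :=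
  ∃ c C : ℝ, 0 < c ∧ ∀ i, c ≤ ‖e i‖ ∧ ‖e i‖ ≤ C

/-- The fundamental function `φ(n) = sup_{|A| ≤ n} ‖Σ_{i∈A} e_i‖` w.r.t. the norm `nn`. -/
noncomputable def fundFn (e : ℕ → X) (nn : X → ℝ) (n : ℕ) : ℝ :=
  sSup { r | ∃ A : Finset ℕ, A.card ≤ n ∧ r = nn (∑ i ∈ A, e i) }

/-- The dual norm (w.r.t. `nn`) of `∑_{i∈A} e_i^*`. -/
noncomputable def dualNormFinset (coord : ℕ → X →L[ℝ] ℝ) (nn : X → ℝ) (A : Finset ℕ) : ℝ :=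
  sSup { r | ∃ x : X, nn x ≤ 1 ∧ r = |∑ i ∈ A, coord i x| }

/-- The dual fundamental function `φ*(n) = sup_{|A| ≤ n} ‖Σ_{i∈A} e_i^*‖*` w.r.t. `nn`. -/
noncomputable def dualFundFn (coord : ℕ → X →L[ℝ] ℝ) (nn : X → ℝ) (n : ℕ) : ℝ :=
  sSup { r | ∃ A : Finset ℕ, A.card ≤ n ∧ r = dualNormFinset coord nn A }

/-- `Δ`-bidemocracy w.r.t. the norm `nn`: `φ(n) φ*(n) ≤ Δ n` for all `n`. -/
def IsBidemocraticWith (e : ℕ → X) (coord : ℕ → X →L[ℝ] ℝ) (nn : X → ℝ) (Δ : ℝ) : Prop :=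
  ∀ n : ℕ, fundFn e nn n * dualFundFn coord nn n ≤ Δ * n

/-- `nn` is a norm on `X` equivalent to the original norm. -/
def IsEquivNorm (nn : X → ℝ) : Prop :=
  (∀ x y : X, nn (x + y) ≤ nn x + nn y) ∧
  (∀ (a : ℝ) (x : X), nn (a • x) = |a| * nn x) ∧
  ∃ c C : ℝ, 0 < c ∧ ∀ x : X, c * ‖x‖ ≤ nn x ∧ nn x ≤ C * ‖x‖

/-- The (finitely supported) vector `Σ_i f i • e i` with coefficients `f ∈ c₀₀`. -/
noncomputable def finVec (e : ℕ → X) (f : ℕ →₀ ℝ) : X :=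
  f.sum fun i c => c • e i

/-- `y = w + t` is a greedy rearrangement of `x = w + u`: the coefficient sequences
`w, u, t` have pairwise disjoint supports, `|supp u| = |supp t|`, and
`‖w‖_∞ ≤ |u_i| = |t_j|` for all `i ∈ supp u`, `j ∈ supp t`. -/
def IsGreedyRearrangement (w u t : ℕ →₀ ℝ) : Prop :=
  Disjoint w.support u.support ∧ Disjoint w.support t.support ∧
  Disjoint u.support t.support ∧ u.support.card = t.support.card ∧
  (∀ i ∈ u.support, ∀ j ∈ t.support, |u i| = |t j|) ∧
  (∀ n : ℕ, ∀ i ∈ u.support, |w n| ≤ |u i|)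

end CommonDefs

section FundDefs

/-- A fundamental (quasi-concave) function on `[1, ∞)`: positive, increasing, and
`x ↦ φ(x)/x` is decreasing. -/
def IsFundamentalFunction (φ : ℝ → ℝ) : Prop :=
  (∀ x : ℝ, 1 ≤ x → 0 < φ x) ∧
  (∀ x y : ℝ, 1 ≤ x → x ≤ y → φ x ≤ φ y) ∧
  (∀ x y : ℝ, 1 ≤ x → x ≤ y → φ y / y ≤ φ x / x)

/-- `δ_φ(y) = liminf_{x→∞} φ(yx)/(y φ(x))`. -/
noncomputable def deltaFn (φ : ℝ → ℝ) (y : ℝ) : ℝ :=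
  Filter.liminf (fun x : ℝ => φ (y * x) / (y * φ x)) Filter.atTop

/-- `δ(φ) = inf_{y ≥ 1} δ_φ(y)`. -/
noncomputable def deltaParam (φ : ℝ → ℝ) : ℝ :=
  sInf { d | ∃ y : ℝ, 1 ≤ y ∧ d = deltaFn φ y }

/-- Equivalence of fundamental functions. -/
def FundEquiv (φ ψ : ℝ → ℝ) : Prop :=
  ∃ a b : ℝ, 0 < a ∧ 0 < b ∧ ∀ x : ℝ, 1 ≤ x → a * φ x ≤ ψ x ∧ ψ x ≤ b * φ x

end FundDefs

namespace Renorm16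

open Filter

/-! ### List helpers -/

lemma list_sum_nonneg' {α : Type*} (l : List α) (f : α → ℝ) (h : ∀ p ∈ l, 0 ≤ f p) :
    0 ≤ (l.map f).sum := by
  induction l with
  | nil => simp
  | cons hd tl ih =>
      simp only [List.map_cons, List.sum_cons]
      have h1 := h hd (by simp)
      have h2 := ih (fun p hp => h p (by simp [hp]))
      linarith

lemma list_sum_le' {α : Type*} (l : List α) (f g : α → ℝ) (h : ∀ p ∈ l, f p ≤ g p) :
    (l.map f).sum ≤ (l.map g).sum := by
  induction l with
  | nil => simp
  | cons hd tl ih =>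
      simp only [List.map_cons, List.sum_cons]
      have h1 := h hd (by simp)
      have h2 := ih (fun p hp => h p (by simp [hp]))
      linarith

lemma list_abs_sum_le' {α : Type*} (l : List α) (f g : α → ℝ) (h : ∀ p ∈ l, |f p| ≤ g p) :
    |(l.map f).sum| ≤ (l.map g).sum := by
  induction l with
  | nil => simp
  | cons hd tl ih =>
      simp only [List.map_cons, List.sum_cons]
      have h1 := h hd (by simp)
      have h2 := ih (fun p hp => h p (by simp [hp]))
      calc |f hd + (tl.map f).sum| ≤ |f hd| + |(tl.map f).sum| := abs_add_le _ _
        _ ≤ g hd + (tl.map g).sum := by linarith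

lemma list_mul_sum' {α : Type*} (l : List α) (f : α → ℝ) (c : ℝ) :
    (l.map fun p => c * f p).sum = c * (l.map f).sum := by
  induction l with
  | nil => simp
  | cons hd tl ih =>
      simp only [List.map_cons, List.sum_cons, ih]
      ring

lemma list_smul_sum' {α : Type*} {Y : Type*} [AddCommMonoid Y] [Module ℝ Y]
    (l : List α) (f : α → Y) (c : ℝ) :
    (l.map fun p => c • f p).sum = c • (l.map f).sum := by
  induction l with
  | nil => simp
  | cons hd tl ih =>
      simp only [List.map_cons, List.sum_cons, ih, smul_add]

lemma finset_list_swap' {α : Type*} (l : List α) (T : Finset ℕ) (g : α → ℕ → ℝ) :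
    ∑ i ∈ T, (l.map fun p => g p i).sum = (l.map fun p => ∑ i ∈ T, g p i).sum := by
  induction l with
  | nil => simp
  | cons hd tl ih =>
      simp only [List.map_cons, List.sum_cons, Finset.sum_add_distrib, ih]

/-! ### The bundled data -/

structure GoodBasis (X : Type*) [NormedAddCommGroup X] [NormedSpace ℝ X] where
  e : ℕ → X
  coord : ℕ → X →L[ℝ] ℝ
  biorth : ∀ i j, coord i (e j) = if i = j then 1 else 0
  expansion : ∀ x : X,
    Filter.Tendsto (fun n => ∑ i ∈ Finset.range n, coord i x • e i) Filter.atTop (nhds x)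
  K : ℝ
  oneleK : (1:ℝ) ≤ K
  unc : ∀ (s : Finset ℕ) (a b : ℕ → ℝ), (∀ i, |a i| ≤ |b i|) →
    ‖∑ i ∈ s, a i • e i‖ ≤ K * ‖∑ i ∈ s, b i • e i‖
  Dm : ℝ
  oneleD : (1:ℝ) ≤ Dm
  dem : ∀ A B : Finset ℕ, A.card ≤ B.card → ‖∑ i ∈ A, e i‖ ≤ Dm * ‖∑ i ∈ B, e i‖
  M : ℝ
  Mnonneg : 0 ≤ M
  projBound : ∀ (n : ℕ) (x : X), ‖∑ i ∈ Finset.range n, coord i x • e i‖ ≤ M * ‖x‖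

namespace GoodBasis

variable {X : Type*} [NormedAddCommGroup X] [NormedSpace ℝ X] (S : GoodBasis X)

lemma e_ne_zero (i : ℕ) : S.e i ≠ 0 := by
  intro h
  have h2 := S.biorth i i
  rw [h] at h2
  simp at h2

lemma e_norm_pos (i : ℕ) : 0 < ‖S.e i‖ := norm_pos_iff.mpr (S.e_ne_zero i)

lemma Dpos : 0 < S.Dm := lt_of_lt_of_le one_pos S.oneleD

lemma Kpos : 0 < S.K := lt_of_lt_of_le one_pos S.oneleK

lemma e_norm_le (i j : ℕ) : ‖S.e i‖ ≤ S.Dm * ‖S.e j‖ := by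
  have h := S.dem {i} {j} (by simp)
  simpa using h

noncomputable def wlo : ℝ := ‖S.e 0‖ / S.Dm

noncomputable def whi : ℝ := S.Dm * ‖S.e 0‖

lemma wlo_pos : 0 < S.wlo := div_pos (S.e_norm_pos 0) S.Dpos

lemma whi_pos : 0 < S.whi := mul_pos S.Dpos (S.e_norm_pos 0)

lemma wlo_le (i : ℕ) : S.wlo ≤ ‖S.e i‖ := by
  rw [wlo, div_le_iff₀ S.Dpos]
  have h := S.e_norm_le 0 i
  linarith

lemma le_whi (i : ℕ) : ‖S.e i‖ ≤ S.whi := S.e_norm_le i 0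

/-! ### First layer norm `NN` -/

def genSet (x : X) : Set ℝ :=
  {r | ∃ (s : Finset ℕ) (a : ℕ → ℝ),
    (∀ i, |a i| * ‖S.e i‖ ≤ |S.coord i x|) ∧ r = ‖∑ i ∈ s, a i • S.e i‖}

noncomputable def NN (x : X) : ℝ := sSup (S.genSet x)

lemma zero_mem_genSet (x : X) : (0:ℝ) ∈ S.genSet x := by
  refine ⟨∅, 0, fun i => by simp, by simp⟩

lemma genSet_nonempty (x : X) : (S.genSet x).Nonempty := ⟨0, S.zero_mem_genSet x⟩

noncomputable def Cup : ℝ := S.K * S.M / S.wlo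

lemma genSet_le (x : X) {r : ℝ} (hr : r ∈ S.genSet x) : r ≤ S.Cup * ‖x‖ := by
  obtain ⟨s, a, ha, rfl⟩ := hr
  set n := s.sup id + 1 with hn
  have hsub : s ⊆ Finset.range n := by
    intro i hi
    exact Finset.mem_range.mpr (Nat.lt_succ_of_le (Finset.le_sup (f := id) hi))
  set a' : ℕ → ℝ := fun i => if i ∈ s then a i else 0 with ha'
  have hsum : ∑ i ∈ s, a i • S.e i = ∑ i ∈ Finset.range n, a' i • S.e i := by
    rw [show ∑ i ∈ s, a i • S.e i = ∑ i ∈ s, a' i • S.e i from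
      Finset.sum_congr rfl fun i hi => by simp [ha', hi]]
    exact Finset.sum_subset hsub (fun i _ hi => by simp [ha', hi])
  have key : ‖∑ i ∈ Finset.range n, a' i • S.e i‖ ≤
      S.K * ‖∑ i ∈ Finset.range n, (S.coord i x * S.wlo⁻¹) • S.e i‖ := by
    apply S.unc
    intro i
    rw [abs_mul, abs_inv, abs_of_pos S.wlo_pos]
    by_cases hi : i ∈ s
    · simp only [ha', if_pos hi]
      have h2 := S.wlo_le i
      have h3 := S.wlo_pos
      calc |a i| ≤ |S.coord i x| / ‖S.e i‖ := by
            rw [le_div_iff₀ (S.e_norm_pos i)]; exact ha i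
        _ ≤ |S.coord i x| / S.wlo := by
            apply div_le_div_of_nonneg_left (abs_nonneg _) h3 h2
        _ = |S.coord i x| * S.wlo⁻¹ := div_eq_mul_inv _ _
    · simp only [ha', if_neg hi, abs_zero]
      exact mul_nonneg (abs_nonneg _) (inv_nonneg.mpr S.wlo_pos.le)
  have hvec : ∑ i ∈ Finset.range n, (S.coord i x * S.wlo⁻¹) • S.e i
      = S.wlo⁻¹ • ∑ i ∈ Finset.range n, S.coord i x • S.e i := by
    rw [Finset.smul_sum]
    exact Finset.sum_congr rfl fun i _ => by rw [smul_smul, mul_comm]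
  rw [hsum]
  calc ‖∑ i ∈ Finset.range n, a' i • S.e i‖
      ≤ S.K * ‖∑ i ∈ Finset.range n, (S.coord i x * S.wlo⁻¹) • S.e i‖ := key
    _ = S.K * (S.wlo⁻¹ * ‖∑ i ∈ Finset.range n, S.coord i x • S.e i‖) := by
        rw [hvec, norm_smul, Real.norm_eq_abs, abs_inv, abs_of_pos S.wlo_pos]
    _ ≤ S.K * (S.wlo⁻¹ * (S.M * ‖x‖)) := by
        have h1 := S.projBound n x
        have h2 : (0:ℝ) < S.wlo⁻¹ := inv_pos.mpr S.wlo_pos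
        have h3 := S.Kpos
        apply mul_le_mul_of_nonneg_left _ h3.le
        exact mul_le_mul_of_nonneg_left h1 h2.le
    _ = S.Cup * ‖x‖ := by
        rw [Cup]
        field_simp

lemma bddAbove_genSet (x : X) : BddAbove (S.genSet x) :=
  ⟨S.Cup * ‖x‖, fun _ hr => S.genSet_le x hr⟩

lemma NN_le (x : X) : S.NN x ≤ S.Cup * ‖x‖ :=
  csSup_le (S.genSet_nonempty x) (fun _ hr => S.genSet_le x hr)

lemma le_NN {x : X} {r : ℝ} (h : r ∈ S.genSet x) : r ≤ S.NN x :=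
  le_csSup (S.bddAbove_genSet x) h

lemma NN_nonneg (x : X) : 0 ≤ S.NN x := S.le_NN (S.zero_mem_genSet x)

lemma NN_mono {x y : X} (h : ∀ i, |S.coord i y| ≤ |S.coord i x|) : S.NN y ≤ S.NN x := by
  apply csSup_le (S.genSet_nonempty y)
  rintro r ⟨s, a, ha, rfl⟩
  exact S.le_NN ⟨s, a, fun i => (ha i).trans (h i), rfl⟩

lemma NN_zero : S.NN 0 = 0 := by
  apply le_antisymm _ (S.NN_nonneg 0)
  apply csSup_le (S.genSet_nonempty 0)
  rintro r ⟨s, a, ha, rfl⟩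
  have hz : ∀ i ∈ s, a i • S.e i = 0 := by
    intro i _
    have h1 := ha i
    simp only [map_zero, abs_zero] at h1
    have h2 : a i = 0 := by
      have := S.e_norm_pos i
      have h3 : |a i| ≤ 0 := by nlinarith [abs_nonneg (a i)]
      exact abs_eq_zero.mp (le_antisymm h3 (abs_nonneg _))
    simp [h2]
  rw [Finset.sum_eq_zero hz]
  simp

end GoodBasis

end Renorm16
namespace Renorm16

namespace GoodBasis

variable {X : Type*} [NormedAddCommGroup X] [NormedSpace ℝ X] (S : GoodBasis X)

lemma NN_add_le (x y : X) : S.NN (x + y) ≤ S.NN x + S.NN y := by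
  apply csSup_le (S.genSet_nonempty _)
  rintro r ⟨s, a, ha, rfl⟩
  set u : ℕ → ℝ := fun i => |S.coord i x| with hu
  set v : ℕ → ℝ := fun i => |S.coord i y| with hv
  set a1 : ℕ → ℝ := fun i => a i * (u i / (u i + v i)) with ha1
  set a2 : ℕ → ℝ := fun i => a i - a1 i with ha2
  have key : ∀ i, |a1 i| * ‖S.e i‖ ≤ u i ∧ |a2 i| * ‖S.e i‖ ≤ v i := by
    intro i
    have hc : |S.coord i (x + y)| ≤ u i + v i := by
      rw [map_add]; exact abs_add_le _ _
    have hu0 : 0 ≤ u i := abs_nonneg _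
    have hv0 : 0 ≤ v i := abs_nonneg _
    have hae : |a i| * ‖S.e i‖ ≤ u i + v i := (ha i).trans hc
    rcases eq_or_lt_of_le (by positivity : (0:ℝ) ≤ u i + v i) with h0 | h0
    · have hu' : u i = 0 := by linarith
      have hv' : v i = 0 := by linarith
      have ha0 : a i = 0 := by
        have he := S.e_norm_pos i
        have : |a i| ≤ 0 := by nlinarith [abs_nonneg (a i)]
        exact abs_eq_zero.mp (le_antisymm this (abs_nonneg _))
      constructor
      · simp [ha1, ha0, hu']
      · simp [ha2, ha1, ha0, hv']
    · have hq0 : 0 ≤ u i / (u i + v i) := by positivity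
      have hq1 : u i / (u i + v i) ≤ 1 := by
        rw [div_le_one h0]; linarith
      have e1 : |a1 i| = |a i| * (u i / (u i + v i)) := by
        rw [ha1]
        simp only
        rw [abs_mul, abs_of_nonneg hq0]
      have e2 : a2 i = a i * (v i / (u i + v i)) := by
        rw [ha2, ha1]
        simp only
        field_simp
        ring
      have e2' : |a2 i| = |a i| * (v i / (u i + v i)) := by
        rw [e2, abs_mul]
        congr 1
        exact abs_of_nonneg (div_nonneg hv0 h0.le)
      constructor
      · rw [e1]
        have : |a i| * (u i / (u i + v i)) * ‖S.e i‖
            = (|a i| * ‖S.e i‖) * (u i / (u i + v i)) := by ring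
        rw [this]
        calc (|a i| * ‖S.e i‖) * (u i / (u i + v i)) ≤ (u i + v i) * (u i / (u i + v i)) := by
              apply mul_le_mul_of_nonneg_right hae hq0
          _ = u i := by field_simp
      · rw [e2']
        have : |a i| * (v i / (u i + v i)) * ‖S.e i‖
            = (|a i| * ‖S.e i‖) * (v i / (u i + v i)) := by ring
        rw [this]
        calc (|a i| * ‖S.e i‖) * (v i / (u i + v i)) ≤ (u i + v i) * (v i / (u i + v i)) := by
              apply mul_le_mul_of_nonneg_right hae (by positivity)
          _ = v i := by field_simp
  have hsplit : ∑ i ∈ s, a i • S.e i = (∑ i ∈ s, a1 i • S.e i) + ∑ i ∈ s, a2 i • S.e i := by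
    rw [← Finset.sum_add_distrib]
    refine Finset.sum_congr rfl fun i _ => ?_
    rw [← add_smul]
    congr 1
    rw [ha2]
    ring
  rw [hsplit]
  calc ‖(∑ i ∈ s, a1 i • S.e i) + ∑ i ∈ s, a2 i • S.e i‖
      ≤ ‖∑ i ∈ s, a1 i • S.e i‖ + ‖∑ i ∈ s, a2 i • S.e i‖ := norm_add_le _ _
    _ ≤ S.NN x + S.NN y := by
        apply add_le_add
        · exact S.le_NN ⟨s, a1, fun i => (key i).1, rfl⟩
        · exact S.le_NN ⟨s, a2, fun i => (key i).2, rfl⟩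

lemma NN_smul_le (c : ℝ) (x : X) (hc : c ≠ 0) : S.NN (c • x) ≤ |c| * S.NN x := by
  apply csSup_le (S.genSet_nonempty _)
  rintro r ⟨s, a, ha, rfl⟩
  have hmem : ‖∑ i ∈ s, (c⁻¹ * a i) • S.e i‖ ∈ S.genSet x := by
    refine ⟨s, fun i => c⁻¹ * a i, fun i => ?_, rfl⟩
    have h1 := ha i
    have h2 : S.coord i (c • x) = c * S.coord i x := by
      rw [map_smul, smul_eq_mul]
    rw [h2, abs_mul] at h1
    rw [abs_mul, abs_inv]
    have hc' : 0 < |c| := abs_pos.mpr hc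
    rw [mul_assoc, inv_mul_le_iff₀ hc']
    exact h1
  have heq : ∑ i ∈ s, a i • S.e i = c • ∑ i ∈ s, (c⁻¹ * a i) • S.e i := by
    rw [Finset.smul_sum]
    refine Finset.sum_congr rfl fun i _ => ?_
    rw [smul_smul, ← mul_assoc, mul_inv_cancel₀ hc, one_mul]
  rw [heq, norm_smul, Real.norm_eq_abs]
  exact mul_le_mul_of_nonneg_left (S.le_NN hmem) (abs_nonneg c)

lemma NN_smul (c : ℝ) (x : X) : S.NN (c • x) = |c| * S.NN x := by
  rcases eq_or_ne c 0 with rfl | hc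
  · simp [S.NN_zero]
  apply le_antisymm (S.NN_smul_le c x hc)
  have h2 := S.NN_smul_le c⁻¹ (c • x) (inv_ne_zero hc)
  rw [smul_smul, inv_mul_cancel₀ hc, one_smul, abs_inv] at h2
  have hc' : 0 < |c| := abs_pos.mpr hc
  calc |c| * S.NN x ≤ |c| * (|c|⁻¹ * S.NN (c • x)) :=
        mul_le_mul_of_nonneg_left h2 hc'.le
    _ = S.NN (c • x) := by field_simp

lemma NN_e (j : ℕ) : S.NN (S.e j) = 1 := by
  apply le_antisymm
  · apply csSup_le (S.genSet_nonempty _)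
    rintro r ⟨s, a, ha, rfl⟩
    have hz : ∀ i, i ≠ j → a i = 0 := by
      intro i hij
      have h1 := ha i
      rw [S.biorth i j, if_neg hij] at h1
      simp only [abs_zero] at h1
      have := S.e_norm_pos i
      have h3 : |a i| ≤ 0 := by nlinarith [abs_nonneg (a i)]
      exact abs_eq_zero.mp (le_antisymm h3 (abs_nonneg _))
    by_cases hj : j ∈ s
    · have : ∑ i ∈ s, a i • S.e i = a j • S.e j := by
        apply Finset.sum_eq_single_of_mem j hj
        intro i _ hij
        rw [hz i hij, zero_smul]
      rw [this, norm_smul, Real.norm_eq_abs]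
      have h1 := ha j
      rw [S.biorth j j, if_pos rfl] at h1
      simpa using h1
    · have : ∑ i ∈ s, a i • S.e i = 0 := by
        apply Finset.sum_eq_zero
        intro i hi
        rw [hz i (fun h => hj (h ▸ hi)), zero_smul]
      rw [this]
      simp
  · apply S.le_NN
    refine ⟨{j}, fun i => if i = j then ‖S.e j‖⁻¹ else 0, fun i => ?_, ?_⟩
    · show |(if i = j then ‖S.e j‖⁻¹ else 0)| * ‖S.e i‖ ≤ |S.coord i (S.e j)|
      by_cases hij : i = j
      · subst hij
        rw [if_pos rfl, S.biorth i i, if_pos rfl, abs_inv, abs_of_pos (S.e_norm_pos i),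
          inv_mul_cancel₀ (S.e_norm_pos i).ne']
        simp
      · rw [if_neg hij]
        simp
    · have hval : ‖(∑ i ∈ ({j} : Finset ℕ), (if i = j then ‖S.e j‖⁻¹ else 0) • S.e i)‖ = 1 := by
        have hif : (if j = j then ‖S.e j‖⁻¹ else 0) = ‖S.e j‖⁻¹ := if_pos rfl
        rw [Finset.sum_singleton, hif, norm_smul, Real.norm_eq_abs, abs_inv,
          abs_of_pos (S.e_norm_pos j), inv_mul_cancel₀ (S.e_norm_pos j).ne']
      exact hval.symm

lemma proj_le_NN (x : X) (n : ℕ) :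
    ‖∑ i ∈ Finset.range n, S.coord i x • S.e i‖ ≤ S.whi * S.NN x := by
  have hmem : S.whi⁻¹ * ‖∑ i ∈ Finset.range n, S.coord i x • S.e i‖ ∈ S.genSet x := by
    refine ⟨Finset.range n, fun i => S.coord i x * S.whi⁻¹, fun i => ?_, ?_⟩
    · rw [abs_mul, abs_inv, abs_of_pos S.whi_pos]
      have h1 := S.le_whi i
      have h2 := S.whi_pos
      have h3 := abs_nonneg (S.coord i x)
      calc |S.coord i x| * S.whi⁻¹ * ‖S.e i‖ ≤ |S.coord i x| * S.whi⁻¹ * S.whi := by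
            apply mul_le_mul_of_nonneg_left h1 (by positivity)
        _ = |S.coord i x| := by field_simp
    · have hvec : ∑ i ∈ Finset.range n, (S.coord i x * S.whi⁻¹) • S.e i
          = S.whi⁻¹ • ∑ i ∈ Finset.range n, S.coord i x • S.e i := by
        rw [Finset.smul_sum]
        exact Finset.sum_congr rfl fun i _ => by rw [smul_smul, mul_comm]
      rw [hvec, norm_smul, Real.norm_eq_abs, abs_inv, abs_of_pos S.whi_pos]
  have h := S.le_NN hmem
  rw [inv_mul_le_iff₀ S.whi_pos] at h
  exact h

lemma norm_le_NN (x : X) : ‖x‖ ≤ S.whi * S.NN x := by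
  have h := (S.expansion x).norm
  exact le_of_tendsto h (Filter.Eventually.of_forall fun n => S.proj_le_NN x n)

lemma NN_sum_le {ι : Type*} [DecidableEq ι] (T : Finset ι) (f : ι → X) :
    S.NN (∑ i ∈ T, f i) ≤ ∑ i ∈ T, S.NN (f i) := by
  induction T using Finset.induction with
  | empty => simp [S.NN_zero]
  | insert _ _ h ih =>
      rw [Finset.sum_insert h, Finset.sum_insert h]
      exact (S.NN_add_le _ _).trans (add_le_add le_rfl ih)

lemma NN_list_sum_le {α : Type*} (l : List α) (f : α → X) :
    S.NN (l.map f).sum ≤ (l.map fun p => S.NN (f p)).sum := by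
  induction l with
  | nil => simp [S.NN_zero]
  | cons hd tl ih =>
      simp only [List.map_cons, List.sum_cons]
      exact (S.NN_add_le _ _).trans (add_le_add le_rfl ih)

lemma coord_sum (A : Finset ℕ) (c : ℕ → ℝ) (j : ℕ) :
    S.coord j (∑ i ∈ A, c i • S.e i) = if j ∈ A then c j else 0 := by
  rw [map_sum]
  have h : ∀ i ∈ A, S.coord j (c i • S.e i) = if i = j then c i else 0 := by
    intro i _
    rw [map_smul, smul_eq_mul, S.biorth j i]
    by_cases hij : i = j
    · subst hij; simp
    · rw [if_neg hij, if_neg (fun h => hij h.symm)]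
      simp
  rw [Finset.sum_congr rfl h]
  exact Finset.sum_ite_eq' A j c

lemma coord_flat (A : Finset ℕ) (j : ℕ) :
    S.coord j (∑ i ∈ A, S.e i) = if j ∈ A then 1 else 0 := by
  have h := S.coord_sum A (fun _ => 1) j
  simpa using h

end GoodBasis

end Renorm16
namespace Renorm16

namespace GoodBasis

variable {X : Type*} [NormedAddCommGroup X] [NormedSpace ℝ X] (S : GoodBasis X)

/-! ### The fundamental function of `NN` -/

def flatSet (m : ℕ) : Set ℝ :=
  {r | ∃ A : Finset ℕ, A.card ≤ m ∧ r = S.NN (∑ i ∈ A, S.e i)}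

noncomputable def phi (m : ℕ) : ℝ := sSup (S.flatSet m)

noncomputable def DN0 : ℝ := S.K * S.wlo⁻¹ * S.Dm

lemma DN0_pos : 0 < S.DN0 :=
  mul_pos (mul_pos S.Kpos (inv_pos.mpr S.wlo_pos)) S.Dpos

/-- Generic comparison: any flat vector of cardinality at most that of `B'` has
`NN`-norm at most `DN0 * ‖∑ i ∈ B', e i‖`. -/
lemma flat_NN_le (A B' : Finset ℕ) (h : A.card ≤ B'.card) :
    S.NN (∑ i ∈ A, S.e i) ≤ S.DN0 * ‖∑ i ∈ B', S.e i‖ := by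
  apply csSup_le (S.genSet_nonempty _)
  rintro r ⟨s, c, hc, rfl⟩
  have key : ‖∑ i ∈ s, c i • S.e i‖ ≤
      S.K * ‖∑ i ∈ s, ((if i ∈ A then (1:ℝ) else 0) * S.wlo⁻¹) • S.e i‖ := by
    apply S.unc
    intro i
    have h1 := hc i
    rw [S.coord_flat] at h1
    by_cases hi : i ∈ A
    · rw [if_pos hi] at h1 ⊢
      rw [abs_mul, abs_inv, abs_of_pos S.wlo_pos, abs_one, one_mul]
      calc |c i| ≤ 1 / ‖S.e i‖ := by
            rw [le_div_iff₀ (S.e_norm_pos i)]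
            simpa using h1
        _ ≤ 1 / S.wlo := by
            apply div_le_div_of_nonneg_left one_pos.le S.wlo_pos (S.wlo_le i)
        _ = S.wlo⁻¹ := one_div _
    · rw [if_neg hi] at h1 ⊢
      simp only [abs_zero] at h1 ⊢
      rw [zero_mul, abs_zero]
      have := S.e_norm_pos i
      nlinarith [abs_nonneg (c i)]
  have hvec : ∑ i ∈ s, ((if i ∈ A then (1:ℝ) else 0) * S.wlo⁻¹) • S.e i
      = S.wlo⁻¹ • ∑ i ∈ s ∩ A, S.e i := by
    rw [Finset.smul_sum]
    rw [← Finset.sum_ite_mem s A (fun i => S.wlo⁻¹ • S.e i)]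
    refine Finset.sum_congr rfl fun i _ => ?_
    by_cases hi : i ∈ A
    · rw [if_pos hi, if_pos hi, one_mul]
    · rw [if_neg hi, if_neg hi, zero_mul, zero_smul]
  calc ‖∑ i ∈ s, c i • S.e i‖
      ≤ S.K * ‖∑ i ∈ s, ((if i ∈ A then (1:ℝ) else 0) * S.wlo⁻¹) • S.e i‖ := key
    _ = S.K * (S.wlo⁻¹ * ‖∑ i ∈ s ∩ A, S.e i‖) := by
        rw [hvec, norm_smul, Real.norm_eq_abs, abs_inv, abs_of_pos S.wlo_pos]
    _ ≤ S.K * (S.wlo⁻¹ * (S.Dm * ‖∑ i ∈ B', S.e i‖)) := by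
        have h1 : (s ∩ A).card ≤ B'.card :=
          le_trans (Finset.card_le_card (Finset.inter_subset_right)) h
        have h2 := S.dem (s ∩ A) B' h1
        have h3 : (0:ℝ) < S.wlo⁻¹ := inv_pos.mpr S.wlo_pos
        exact mul_le_mul_of_nonneg_left
          (mul_le_mul_of_nonneg_left h2 h3.le) S.Kpos.le
    _ = S.DN0 * ‖∑ i ∈ B', S.e i‖ := by rw [DN0]; ring

lemma bddAbove_flatSet (m : ℕ) : BddAbove (S.flatSet m) := by
  refine ⟨S.DN0 * ‖∑ i ∈ Finset.range m, S.e i‖, ?_⟩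
  rintro r ⟨A, hA, rfl⟩
  exact S.flat_NN_le A (Finset.range m) (by simpa using hA)

lemma flatSet_nonempty (m : ℕ) : (S.flatSet m).Nonempty :=
  ⟨S.NN (∑ i ∈ (∅ : Finset ℕ), S.e i), ⟨∅, by simp, rfl⟩⟩

lemma le_phi (A : Finset ℕ) (m : ℕ) (h : A.card ≤ m) :
    S.NN (∑ i ∈ A, S.e i) ≤ S.phi m :=
  le_csSup (S.bddAbove_flatSet m) ⟨A, h, rfl⟩

lemma phi_nonneg (m : ℕ) : 0 ≤ S.phi m := by
  have h := S.le_phi ∅ m (by simp)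
  simpa [S.NN_zero] using h

lemma phi_mono {m m' : ℕ} (h : m ≤ m') : S.phi m ≤ S.phi m' := by
  apply csSup_le (S.flatSet_nonempty m)
  rintro r ⟨A, hA, rfl⟩
  exact S.le_phi A m' (hA.trans h)

lemma phi_zero : S.phi 0 = 0 := by
  apply le_antisymm _ (S.phi_nonneg 0)
  apply csSup_le (S.flatSet_nonempty 0)
  rintro r ⟨A, hA, rfl⟩
  have : A = ∅ := Finset.card_eq_zero.mp (Nat.le_zero.mp hA)
  subst this
  simp [S.NN_zero]

lemma phi_one : S.phi 1 = 1 := by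
  apply le_antisymm
  · apply csSup_le (S.flatSet_nonempty 1)
    rintro r ⟨A, hA, rfl⟩
    obtain ⟨a, ha⟩ := Finset.card_le_one_iff_subset_singleton.mp hA
    rcases Finset.subset_singleton_iff.mp ha with rfl | rfl
    · simp [S.NN_zero]
    · rw [Finset.sum_singleton, S.NN_e]
  · have h := S.le_phi {0} 1 (by simp)
    rw [Finset.sum_singleton, S.NN_e] at h
    exact h

noncomputable def DN : ℝ := S.DN0 * S.whi

lemma phi_dem (m : ℕ) (B' : Finset ℕ) (h : m ≤ B'.card) :
    S.phi m ≤ S.DN * S.NN (∑ i ∈ B', S.e i) := by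
  apply csSup_le (S.flatSet_nonempty m)
  rintro r ⟨A, hA, rfl⟩
  calc S.NN (∑ i ∈ A, S.e i) ≤ S.DN0 * ‖∑ i ∈ B', S.e i‖ :=
        S.flat_NN_le A B' (hA.trans h)
    _ ≤ S.DN0 * (S.whi * S.NN (∑ i ∈ B', S.e i)) :=
        mul_le_mul_of_nonneg_left (S.norm_le_NN _) S.DN0_pos.le
    _ = S.DN * S.NN (∑ i ∈ B', S.e i) := by rw [DN]; ring

lemma phi_step (b : ℕ) : (b:ℝ) * S.phi (b+1) ≤ ((b:ℝ)+1) * S.phi b := by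
  rcases Nat.eq_zero_or_pos b with rfl | hb
  · simpa using S.phi_nonneg 0
  have hb' : (0:ℝ) < b := by exact_mod_cast hb
  have key : ∀ r ∈ S.flatSet (b+1), r ≤ (((b:ℝ)+1) * S.phi b) / (b:ℝ) := by
    rintro r ⟨A, hA, rfl⟩
    rcases le_or_gt A.card b with h | h
    · have h1 := S.le_phi A b h
      have h2 := S.phi_nonneg b
      rw [le_div_iff₀ hb']
      nlinarith
    · have hcard : A.card = b + 1 := le_antisymm hA h
      have hid : ∑ i ∈ A, (∑ j ∈ A.erase i, S.e j) = b • ∑ j ∈ A, S.e j := by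
        have hterm : ∀ i ∈ A, ∑ j ∈ A.erase i, S.e j = (∑ j ∈ A, S.e j) - S.e i :=
          fun i hi => Finset.sum_erase_eq_sub hi
        rw [Finset.sum_congr rfl hterm, Finset.sum_sub_distrib, Finset.sum_const, hcard,
          succ_nsmul]
        abel
      have h2 : S.NN (b • ∑ j ∈ A, S.e j) ≤ ∑ i ∈ A, S.NN (∑ j ∈ A.erase i, S.e j) := by
        rw [← hid]; exact S.NN_sum_le A _
      have h3 : ∀ i ∈ A, S.NN (∑ j ∈ A.erase i, S.e j) ≤ S.phi b := by
        intro i hi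
        apply S.le_phi
        rw [Finset.card_erase_of_mem hi, hcard]
        omega
      have h4 : ∑ i ∈ A, S.NN (∑ j ∈ A.erase i, S.e j) ≤ (A.card : ℝ) * S.phi b := by
        calc ∑ i ∈ A, S.NN (∑ j ∈ A.erase i, S.e j) ≤ ∑ _i ∈ A, S.phi b :=
              Finset.sum_le_sum h3
          _ = (A.card : ℝ) * S.phi b := by rw [Finset.sum_const, nsmul_eq_mul]
      have h5 : S.NN (b • ∑ j ∈ A, S.e j) = (b:ℝ) * S.NN (∑ j ∈ A, S.e j) := by
        rw [← Nat.cast_smul_eq_nsmul ℝ, S.NN_smul, Nat.abs_cast]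
      rw [h5] at h2
      rw [hcard] at h4
      push_cast at h4
      rw [le_div_iff₀ hb']
      nlinarith
  have h : S.phi (b+1) ≤ (((b:ℝ)+1) * S.phi b) / (b:ℝ) :=
    csSup_le (S.flatSet_nonempty (b+1)) key
  rw [le_div_iff₀ hb'] at h
  linarith

lemma phi_ratio {m b : ℕ} (h : m ≤ b) : (m:ℝ) * S.phi b ≤ (b:ℝ) * S.phi m := by
  induction b with
  | zero =>
      have : m = 0 := Nat.le_zero.mp h
      subst this
      simp
  | succ n ih =>
      rcases eq_or_lt_of_le h with rfl | h'
      · exact le_of_eq (by ring)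
      · have hmn : m ≤ n := Nat.lt_succ_iff.mp h'
        have h1 := ih hmn
        have h2 := S.phi_step n
        rcases Nat.eq_zero_or_pos n with rfl | hn
        · have : m = 0 := Nat.le_zero.mp hmn
          subst this
          simpa using S.phi_nonneg 0
        · have hn' : (0:ℝ) < n := by exact_mod_cast hn
          have hm' : (0:ℝ) ≤ m := by positivity
          have e1 : (n:ℝ) * ((m:ℝ) * S.phi (n+1)) ≤ (n:ℝ) * (((n:ℝ)+1) * S.phi m) := by
            nlinarith [S.phi_nonneg (n+1), S.phi_nonneg m, S.phi_nonneg n]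
          have := le_of_mul_le_mul_left e1 hn'
          push_cast
          linarith

end GoodBasis

end Renorm16
namespace Renorm16

namespace GoodBasis

variable {X : Type*} [NormedAddCommGroup X] [NormedSpace ℝ X] (S : GoodBasis X)

/-! ### The second layer norm -/

/-- An atom datum: a weight, a set, and coefficients. -/
abbrev Atom := ℝ × Finset ℕ × (ℕ → ℝ)

/-- The vector represented by an atom. -/
noncomputable def atomVec (p : Atom) : X := ∑ i ∈ p.2.1, p.2.2 i • S.e i

/-- The price of an atom. -/
noncomputable def atomCost (p : Atom) : ℝ := p.1 * S.phi p.2.1.card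

/-- Admissibility of an atom list. -/
def AtomsOK (l : List Atom) : Prop := ∀ p ∈ l, 0 ≤ p.1 ∧ ∀ i : ℕ, |p.2.2 i| ≤ p.1

def costSet (CC : ℝ) (x : X) : Set ℝ :=
  {c | ∃ (r : X) (l : List Atom), AtomsOK l ∧
    x = r + (l.map fun p => S.atomVec p).sum ∧
    c = CC * S.NN r + (l.map fun p => S.atomCost p).sum}

noncomputable def nnN (CC : ℝ) (x : X) : ℝ := sInf (S.costSet CC x)

lemma costSet_nonempty (CC : ℝ) (x : X) : (S.costSet CC x).Nonempty :=
  ⟨CC * S.NN x, x, [], by intro p hp; simp at hp, by simp, by simp⟩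

lemma atomVec_NN_le {l : List Atom} (hl : AtomsOK l) {p : Atom} (hp : p ∈ l) :
    S.NN (S.atomVec p) ≤ S.atomCost p := by
  have hmono : S.NN (S.atomVec p) ≤ S.NN (p.1 • ∑ i ∈ p.2.1, S.e i) := by
    apply S.NN_mono
    intro j
    rw [atomVec, S.coord_sum, map_smul, smul_eq_mul, S.coord_flat, abs_mul]
    by_cases hj : j ∈ p.2.1
    · rw [if_pos hj, if_pos hj, abs_one, mul_one]
      exact ((hl p hp).2 j).trans (le_abs_self _)
    · rw [if_neg hj, if_neg hj, abs_zero, mul_zero]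
  calc S.NN (S.atomVec p) ≤ S.NN (p.1 • ∑ i ∈ p.2.1, S.e i) := hmono
    _ = |p.1| * S.NN (∑ i ∈ p.2.1, S.e i) := S.NN_smul _ _
    _ ≤ p.1 * S.phi p.2.1.card := by
        rw [abs_of_nonneg (hl p hp).1]
        exact mul_le_mul_of_nonneg_left (S.le_phi _ _ le_rfl) (hl p hp).1

lemma costSet_ge {CC : ℝ} (hCC : 1 ≤ CC) {x : X} {c : ℝ} (hc : c ∈ S.costSet CC x) :
    S.NN x ≤ c := by
  obtain ⟨r, l, hl, hx, rfl⟩ := hc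
  have h1 : S.NN x ≤ S.NN r + (l.map fun p => S.NN (S.atomVec p)).sum := by
    rw [hx]
    exact (S.NN_add_le _ _).trans (add_le_add le_rfl (S.NN_list_sum_le l _))
  have h2 : (l.map fun p => S.NN (S.atomVec p)).sum ≤ (l.map fun p => S.atomCost p).sum :=
    list_sum_le' l _ _ (fun p hp => S.atomVec_NN_le hl hp)
  have h3 : S.NN r ≤ CC * S.NN r := le_mul_of_one_le_left (S.NN_nonneg r) hCC
  linarith

lemma bddBelow_costSet {CC : ℝ} (hCC : 1 ≤ CC) (x : X) : BddBelow (S.costSet CC x) :=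
  ⟨0, fun c hc => (S.NN_nonneg x).trans (S.costSet_ge hCC hc)⟩

lemma NN_le_nnN {CC : ℝ} (hCC : 1 ≤ CC) (x : X) : S.NN x ≤ S.nnN CC x :=
  le_csInf (S.costSet_nonempty CC x) (fun _ hc => S.costSet_ge hCC hc)

lemma nnN_le {CC : ℝ} (hCC : 1 ≤ CC) {x : X} {c : ℝ} (hc : c ∈ S.costSet CC x) :
    S.nnN CC x ≤ c :=
  csInf_le (S.bddBelow_costSet hCC x) hc

lemma nnN_le_CC {CC : ℝ} (hCC : 1 ≤ CC) (x : X) : S.nnN CC x ≤ CC * S.NN x :=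
  S.nnN_le hCC ⟨x, [], by intro p hp; simp at hp, by simp, by simp⟩

lemma nnN_nonneg {CC : ℝ} (hCC : 1 ≤ CC) (x : X) : 0 ≤ S.nnN CC x :=
  (S.NN_nonneg x).trans (S.NN_le_nnN hCC x)

lemma nnN_zero {CC : ℝ} (hCC : 1 ≤ CC) : S.nnN CC 0 = 0 := by
  apply le_antisymm
  · have h := S.nnN_le_CC hCC 0
    rw [S.NN_zero, mul_zero] at h
    exact h
  · exact S.nnN_nonneg hCC 0

lemma nnN_add_le {CC : ℝ} (hCC : 1 ≤ CC) (x y : X) :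
    S.nnN CC (x + y) ≤ S.nnN CC x + S.nnN CC y := by
  have key : ∀ c1 ∈ S.costSet CC x, ∀ c2 ∈ S.costSet CC y, S.nnN CC (x + y) ≤ c1 + c2 := by
    rintro c1 ⟨r1, l1, hl1, hx1, rfl⟩ c2 ⟨r2, l2, hl2, hx2, rfl⟩
    have hmem : CC * S.NN (r1 + r2) + ((l1 ++ l2).map fun p => S.atomCost p).sum
        ∈ S.costSet CC (x + y) := by
      refine ⟨r1 + r2, l1 ++ l2, ?_, ?_, rfl⟩
      · intro p hp
        rcases List.mem_append.mp hp with h | h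
        exacts [hl1 p h, hl2 p h]
      · rw [hx1, hx2, List.map_append, List.sum_append]
        abel
    have h1 := S.nnN_le hCC hmem
    have h2 := S.NN_add_le r1 r2
    have h3 : (0:ℝ) ≤ CC := le_trans zero_le_one hCC
    have h4 : CC * S.NN (r1 + r2) ≤ CC * S.NN r1 + CC * S.NN r2 := by
      calc CC * S.NN (r1 + r2) ≤ CC * (S.NN r1 + S.NN r2) :=
            mul_le_mul_of_nonneg_left h2 h3
        _ = CC * S.NN r1 + CC * S.NN r2 := by ring
    rw [List.map_append, List.sum_append] at h1
    linarith
  have step1 : ∀ c1 ∈ S.costSet CC x, S.nnN CC (x + y) - c1 ≤ S.nnN CC y := by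
    intro c1 h1
    apply le_csInf (S.costSet_nonempty CC y)
    intro c2 h2
    linarith [key c1 h1 c2 h2]
  have step2 : S.nnN CC (x + y) - S.nnN CC y ≤ S.nnN CC x := by
    apply le_csInf (S.costSet_nonempty CC x)
    intro c1 h1
    linarith [step1 c1 h1]
  linarith

lemma nnN_smul_le {CC : ℝ} (hCC : 1 ≤ CC) (c : ℝ) (x : X) :
    S.nnN CC (c • x) ≤ |c| * S.nnN CC x := by
  rcases eq_or_ne c 0 with rfl | hc
  · rw [zero_smul, S.nnN_zero hCC, abs_zero, zero_mul]
  have key : ∀ d ∈ S.costSet CC x, |c| * d ∈ S.costSet CC (c • x) := by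
    rintro d ⟨r, l, hl, hx, rfl⟩
    refine ⟨c • r, l.map fun p => (|c| * p.1, p.2.1, fun i => c * p.2.2 i), ?_, ?_, ?_⟩
    · intro p hp
      rw [List.mem_map] at hp
      obtain ⟨q, hq, rfl⟩ := hp
      refine ⟨mul_nonneg (abs_nonneg c) (hl q hq).1, fun i => ?_⟩
      simp only
      rw [abs_mul]
      exact mul_le_mul_of_nonneg_left ((hl q hq).2 i) (abs_nonneg c)
    · rw [hx, smul_add]
      congr 1
      rw [List.map_map, ← list_smul_sum']
      congr 1
      apply List.map_congr_left
      intro q _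
      show c • S.atomVec q = S.atomVec (|c| * q.1, q.2.1, fun i => c * q.2.2 i)
      rw [atomVec, atomVec, Finset.smul_sum]
      exact Finset.sum_congr rfl fun i _ => by rw [smul_smul]
    · rw [S.NN_smul, List.map_map]
      have : ((fun p => S.atomCost p) ∘ fun p : Atom => ((|c| * p.1, p.2.1, fun i => c * p.2.2 i) : Atom))
          = fun p : Atom => |c| * S.atomCost p := by
        funext q
        show (|c| * q.1) * S.phi q.2.1.card = |c| * (q.1 * S.phi q.2.1.card)
        ring
      rw [this, list_mul_sum']
      ring
  have hc' : 0 < |c| := abs_pos.mpr hc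
  have h2 : ∀ d ∈ S.costSet CC x, |c|⁻¹ * S.nnN CC (c • x) ≤ d := by
    intro d hd
    rw [inv_mul_le_iff₀ hc']
    exact S.nnN_le hCC (key d hd)
  have h3 : |c|⁻¹ * S.nnN CC (c • x) ≤ S.nnN CC x :=
    le_csInf (S.costSet_nonempty CC x) h2
  calc S.nnN CC (c • x) = |c| * (|c|⁻¹ * S.nnN CC (c • x)) := by field_simp
    _ ≤ |c| * S.nnN CC x := mul_le_mul_of_nonneg_left h3 hc'.le

lemma nnN_smul {CC : ℝ} (hCC : 1 ≤ CC) (c : ℝ) (x : X) :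
    S.nnN CC (c • x) = |c| * S.nnN CC x := by
  rcases eq_or_ne c 0 with rfl | hc
  · rw [zero_smul, S.nnN_zero hCC, abs_zero, zero_mul]
  apply le_antisymm (S.nnN_smul_le hCC c x)
  have h2 := S.nnN_smul_le hCC c⁻¹ (c • x)
  rw [smul_smul, inv_mul_cancel₀ hc, one_smul, abs_inv] at h2
  have hc' : 0 < |c| := abs_pos.mpr hc
  calc |c| * S.nnN CC x ≤ |c| * (|c|⁻¹ * S.nnN CC (c • x)) :=
        mul_le_mul_of_nonneg_left h2 hc'.le
    _ = S.nnN CC (c • x) := by field_simp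

lemma nnN_flat_le {CC : ℝ} (hCC : 1 ≤ CC) (A : Finset ℕ) :
    S.nnN CC (∑ i ∈ A, S.e i) ≤ S.phi A.card := by
  have hmem : CC * S.NN 0 + (([((1:ℝ), A, fun _ => (1:ℝ))] : List Atom).map
      fun p => S.atomCost p).sum ∈ S.costSet CC (∑ i ∈ A, S.e i) := by
    refine ⟨0, [((1:ℝ), A, fun _ => (1:ℝ))], ?_, ?_, rfl⟩
    · intro p hp
      simp only [List.mem_singleton] at hp
      subst hp
      exact ⟨zero_le_one, fun i => by norm_num⟩
    · rw [zero_add]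
      simp [atomVec]
  have h := S.nnN_le hCC hmem
  rw [S.NN_zero, mul_zero, zero_add] at h
  simpa [atomCost] using h

end GoodBasis

end Renorm16
namespace Renorm16

namespace GoodBasis

variable {X : Type*} [NormedAddCommGroup X] [NormedSpace ℝ X] (S : GoodBasis X)

lemma nnN_flat_ge {CC δ : ℝ} (hCC : 1 ≤ CC) (hδ0 : 0 < δ) (hδ1 : δ ≤ 1)
    (hCCδ : S.DN ≤ δ * CC) (B0 : Finset ℕ) :
    (1 - δ) * S.phi B0.card ≤ S.nnN CC (∑ i ∈ B0, S.e i) := by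
  classical
  apply le_csInf (S.costSet_nonempty CC _)
  intro c hc
  obtain ⟨r, l, hl, hx, rfl⟩ := hc
  rcases Nat.eq_zero_or_pos B0.card with hb0 | hb0
  · rw [hb0, S.phi_zero, mul_zero]
    exact (S.NN_nonneg _).trans (S.costSet_ge hCC ⟨r, l, hl, hx, rfl⟩)
  have hb' : (0:ℝ) < (B0.card : ℝ) := by exact_mod_cast hb0
  set B' := B0.filter (fun i => δ ≤ |S.coord i r|) with hB'
  set Sc := B0 \ B' with hSc
  have hcov : ∀ i ∈ Sc, (1 - δ) ≤ (l.map fun p => if i ∈ p.2.1 then p.1 else 0).sum := by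
    intro i hi
    obtain ⟨hiB0, hiB'⟩ := Finset.mem_sdiff.mp hi
    have hsmall : |S.coord i r| < δ := by
      by_contra hcon
      exact hiB' (Finset.mem_filter.mpr ⟨hiB0, not_lt.mp hcon⟩)
    have hxi : S.coord i (∑ j ∈ B0, S.e j) = 1 := by
      rw [S.coord_flat, if_pos hiB0]
    have hsum : S.coord i ((l.map fun p => S.atomVec p).sum) = 1 - S.coord i r := by
      have h := congrArg (S.coord i) hx
      rw [map_add, hxi] at h
      linarith
    have habs : |S.coord i ((l.map fun p => S.atomVec p).sum)|
        ≤ (l.map fun p => if i ∈ p.2.1 then p.1 else 0).sum := by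
      rw [map_list_sum, List.map_map]
      apply list_abs_sum_le'
      intro p hp
      show |S.coord i (S.atomVec p)| ≤ _
      rw [atomVec, S.coord_sum]
      by_cases hip : i ∈ p.2.1
      · rw [if_pos hip, if_pos hip]
        exact (hl p hp).2 i
      · rw [if_neg hip, if_neg hip, abs_zero]
    rw [hsum] at habs
    have h1 : 1 - δ ≤ |1 - S.coord i r| := by
      have h2 := abs_sub_abs_le_abs_sub (1:ℝ) (S.coord i r)
      rw [abs_one] at h2
      linarith
    linarith
  have hcount : (1-δ) * (Sc.card : ℝ) * S.phi B0.card
      ≤ (B0.card : ℝ) * (l.map fun p => S.atomCost p).sum := by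
    have per_p : ∀ p ∈ l, p.1 * (((p.2.1 ∩ Sc).card : ℝ) * S.phi B0.card)
        ≤ (B0.card : ℝ) * S.atomCost p := by
      intro p hp
      have hq1 : (p.2.1 ∩ Sc).card ≤ B0.card := by
        apply Finset.card_le_card
        exact (Finset.inter_subset_right).trans (Finset.sdiff_subset)
      have hq2 : (p.2.1 ∩ Sc).card ≤ p.2.1.card :=
        Finset.card_le_card Finset.inter_subset_left
      have r1 := S.phi_ratio hq1
      have r2 := S.phi_mono hq2
      have hμ := (hl p hp).1
      have r3 : ((p.2.1 ∩ Sc).card : ℝ) * S.phi B0.card ≤ (B0.card:ℝ) * S.phi p.2.1.card :=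
        r1.trans (mul_le_mul_of_nonneg_left r2 hb'.le)
      rw [atomCost]
      calc p.1 * (((p.2.1 ∩ Sc).card : ℝ) * S.phi B0.card)
          ≤ p.1 * ((B0.card:ℝ) * S.phi p.2.1.card) := mul_le_mul_of_nonneg_left r3 hμ
        _ = (B0.card : ℝ) * (p.1 * S.phi p.2.1.card) := by ring
    have s1 : (l.map fun p => p.1 * (((p.2.1 ∩ Sc).card : ℝ) * S.phi B0.card)).sum
        ≤ (l.map fun p => (B0.card : ℝ) * S.atomCost p).sum :=
      list_sum_le' l _ _ per_p
    have s2 : (l.map fun p => p.1 * (((p.2.1 ∩ Sc).card : ℝ) * S.phi B0.card)).sum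
        = S.phi B0.card * (l.map fun p => p.1 * ((p.2.1 ∩ Sc).card : ℝ)).sum := by
      rw [← list_mul_sum']
      congr 1
      apply List.map_congr_left
      intro p _
      ring
    have s3 : ∑ i ∈ Sc, (l.map fun p => if i ∈ p.2.1 then p.1 else 0).sum
        = (l.map fun p => p.1 * ((p.2.1 ∩ Sc).card : ℝ)).sum := by
      rw [finset_list_swap']
      refine congrArg List.sum ?_
      apply List.map_congr_left
      intro p _
      show ∑ i ∈ Sc, (if i ∈ p.2.1 then p.1 else 0) = p.1 * ((p.2.1 ∩ Sc).card : ℝ)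
      rw [Finset.sum_ite_mem, Finset.sum_const, Finset.inter_comm, nsmul_eq_mul]
      ring
    have s4 : (1-δ) * (Sc.card:ℝ)
        ≤ ∑ i ∈ Sc, (l.map fun p => if i ∈ p.2.1 then p.1 else 0).sum := by
      calc (1-δ) * (Sc.card:ℝ) = ∑ _i ∈ Sc, (1-δ) := by
            rw [Finset.sum_const, nsmul_eq_mul]; ring
        _ ≤ _ := Finset.sum_le_sum hcov
    have s5 : (l.map fun p => (B0.card : ℝ) * S.atomCost p).sum
        = (B0.card : ℝ) * (l.map fun p => S.atomCost p).sum := list_mul_sum' l _ _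
    have hphi0 := S.phi_nonneg B0.card
    calc (1-δ) * (Sc.card : ℝ) * S.phi B0.card
        ≤ (∑ i ∈ Sc, (l.map fun p => if i ∈ p.2.1 then p.1 else 0).sum) * S.phi B0.card :=
          mul_le_mul_of_nonneg_right s4 hphi0
      _ = S.phi B0.card * (l.map fun p => p.1 * ((p.2.1 ∩ Sc).card : ℝ)).sum := by
          rw [s3]; ring
      _ ≤ (B0.card : ℝ) * (l.map fun p => S.atomCost p).sum := by
          rw [← s2, ← s5]; exact s1
  have hrpart : ((B'.card : ℝ)) * S.phi B0.card ≤ (B0.card : ℝ) * (CC * S.NN r) := by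
    have hB'card : B'.card ≤ B0.card := Finset.card_le_card (Finset.filter_subset _ _)
    have h3 := S.phi_ratio hB'card
    have h4 : S.phi B'.card ≤ CC * S.NN r := by
      have h1 : δ * S.NN (∑ i ∈ B', S.e i) ≤ S.NN r := by
        have hdom : ∀ j, |S.coord j (δ • ∑ i ∈ B', S.e i)| ≤ |S.coord j r| := by
          intro j
          rw [map_smul, smul_eq_mul, S.coord_flat, abs_mul, abs_of_pos hδ0]
          by_cases hj : j ∈ B'
          · rw [if_pos hj, abs_one, mul_one]
            exact (Finset.mem_filter.mp hj).2
          · rw [if_neg hj, abs_zero, mul_zero]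
            exact abs_nonneg _
        have hmono := S.NN_mono hdom
        rw [S.NN_smul, abs_of_pos hδ0] at hmono
        exact hmono
      have h2 := S.phi_dem B'.card B' le_rfl
      have hNN0 := S.NN_nonneg (∑ i ∈ B', S.e i)
      have h5 : S.DN * S.NN (∑ i ∈ B', S.e i) ≤ δ * CC * S.NN (∑ i ∈ B', S.e i) :=
        mul_le_mul_of_nonneg_right hCCδ hNN0
      have hCC0 : (0:ℝ) ≤ CC := le_trans zero_le_one hCC
      nlinarith
    calc ((B'.card : ℝ)) * S.phi B0.card ≤ (B0.card : ℝ) * S.phi B'.card := h3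
      _ ≤ (B0.card : ℝ) * (CC * S.NN r) := mul_le_mul_of_nonneg_left h4 hb'.le
  have hScB : (Sc.card : ℝ) = (B0.card : ℝ) - (B'.card : ℝ) := by
    rw [hSc, Finset.card_sdiff_of_subset (Finset.filter_subset _ _),
      Nat.cast_sub (Finset.card_le_card (Finset.filter_subset _ _))]
  have hBp : (0:ℝ) ≤ (B'.card : ℝ) := Nat.cast_nonneg _
  have hphi0 := S.phi_nonneg B0.card
  have hmain : (B0.card : ℝ) * ((1-δ) * S.phi B0.card)
      ≤ (B0.card : ℝ) * (CC * S.NN r + (l.map fun p => S.atomCost p).sum) := by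
    rw [hScB] at hcount
    nlinarith [mul_nonneg (mul_nonneg hδ0.le hBp) hphi0]
  exact le_of_mul_le_mul_left hmain hb'

lemma nnN_uncond {CC : ℝ} (hCC : 1 ≤ CC) (s : Finset ℕ) (a b : ℕ → ℝ)
    (hab : ∀ i, |a i| ≤ |b i|) :
    S.nnN CC (∑ i ∈ s, a i • S.e i) ≤ S.nnN CC (∑ i ∈ s, b i • S.e i) := by
  classical
  apply le_csInf (S.costSet_nonempty CC _)
  intro c hc
  obtain ⟨r, l, hl, hx, rfl⟩ := hc
  set t : ℕ → ℝ := fun i => if b i = 0 then 0 else a i / b i with ht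
  have habs_t : ∀ i, |t i| ≤ 1 := by
    intro i
    by_cases hbi : b i = 0
    · simp [ht, hbi]
    · rw [ht]
      simp only [if_neg hbi]
      rw [abs_div]
      rw [div_le_one (abs_pos.mpr hbi)]
      exact hab i
  have hat : ∀ i, a i = t i * b i := by
    intro i
    by_cases hbi : b i = 0
    · have h1 := hab i
      rw [hbi, abs_zero] at h1
      have : a i = 0 := abs_eq_zero.mp (le_antisymm h1 (abs_nonneg _))
      rw [this, ht]
      simp [hbi]
    · rw [ht]
      simp only [if_neg hbi]
      field_simp
  set l' : List Atom := l.map fun p => (p.1, p.2.1, fun i => t i * p.2.2 i) with hl'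
  set asum' := (l'.map fun p => S.atomVec p).sum with hasum'
  set r' := (∑ i ∈ s, a i • S.e i) - asum' with hr'
  have hmem : CC * S.NN r' + (l'.map fun p => S.atomCost p).sum
      ∈ S.costSet CC (∑ i ∈ s, a i • S.e i) := by
    refine ⟨r', l', ?_, by rw [hr']; abel, rfl⟩
    intro p hp
    rw [hl', List.mem_map] at hp
    obtain ⟨q, hq, rfl⟩ := hp
    refine ⟨(hl q hq).1, fun i => ?_⟩
    show |t i * q.2.2 i| ≤ q.1
    rw [abs_mul]
    calc |t i| * |q.2.2 i| ≤ 1 * q.1 :=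
          mul_le_mul (habs_t i) ((hl q hq).2 i) (abs_nonneg _) zero_le_one
      _ = q.1 := one_mul _
  have hcost_eq : (l'.map fun p => S.atomCost p).sum = (l.map fun p => S.atomCost p).sum := by
    rw [hl', List.map_map]
    refine congrArg List.sum ?_
    apply List.map_congr_left
    intro q _
    rfl
  have hNNr' : S.NN r' ≤ S.NN r := by
    apply S.NN_mono
    intro j
    have e_asum : S.coord j asum' = t j * S.coord j ((l.map fun p => S.atomVec p).sum) := by
      rw [hasum', hl', List.map_map, map_list_sum, map_list_sum, List.map_map, List.map_map]
      rw [← list_mul_sum']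
      congr 1
      apply List.map_congr_left
      intro p _
      show S.coord j (S.atomVec (p.1, p.2.1, fun i => t i * p.2.2 i))
          = t j * S.coord j (S.atomVec p)
      rw [atomVec, atomVec, S.coord_sum, S.coord_sum]
      by_cases hj : j ∈ p.2.1
      · rw [if_pos hj, if_pos hj]
      · rw [if_neg hj, if_neg hj, mul_zero]
    have e_xa : S.coord j (∑ i ∈ s, a i • S.e i) = t j * S.coord j (∑ i ∈ s, b i • S.e i) := by
      rw [S.coord_sum, S.coord_sum]
      by_cases hj : j ∈ s
      · rw [if_pos hj, if_pos hj]
        exact hat j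
      · rw [if_neg hj, if_neg hj, mul_zero]
    have e_r : S.coord j r = S.coord j (∑ i ∈ s, b i • S.e i)
        - S.coord j ((l.map fun p => S.atomVec p).sum) := by
      have h := congrArg (S.coord j) hx
      rw [map_add] at h
      linarith
    have e_r' : S.coord j r' = t j * S.coord j r := by
      rw [hr', map_sub, e_asum, e_xa, e_r]
      ring
    rw [e_r', abs_mul]
    calc |t j| * |S.coord j r| ≤ 1 * |S.coord j r| :=
          mul_le_mul_of_nonneg_right (habs_t j) (abs_nonneg _)
      _ = |S.coord j r| := one_mul _
  have h1 := S.nnN_le hCC hmem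
  rw [hcost_eq] at h1
  have hCC0 : (0:ℝ) ≤ CC := le_trans zero_le_one hCC
  have h2 : CC * S.NN r' ≤ CC * S.NN r := mul_le_mul_of_nonneg_left hNNr' hCC0
  linarith

lemma nnN_e {CC : ℝ} (hCC : 1 ≤ CC) (j : ℕ) : S.nnN CC (S.e j) = 1 := by
  apply le_antisymm
  · have h := S.nnN_flat_le hCC {j}
    rw [Finset.sum_singleton, Finset.card_singleton, S.phi_one] at h
    exact h
  · have h := S.NN_le_nnN hCC (S.e j)
    rw [S.NN_e] at h
    exact h

/-- The main construction. -/
lemma main (ε : ℝ) (hε : 0 < ε) :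
    ∃ nn : X → ℝ, IsEquivNorm nn ∧ IsNormalizedWith S.e nn ∧
      IsUnconditionalWith S.e nn 1 ∧ IsDemocraticWith S.e nn (1 + ε) := by
  set δ : ℝ := ε / (1 + ε) with hδ
  have hε1 : (0:ℝ) < 1 + ε := by linarith
  have hδ0 : 0 < δ := div_pos hε hε1
  have hδ1 : δ < 1 := by
    rw [hδ, div_lt_one hε1]
    linarith
  have h1δ : 1 - δ = (1 + ε)⁻¹ := by
    rw [hδ]
    field_simp
    ring
  set CC : ℝ := max 1 (S.DN / δ) with hCC
  have hCC1 : (1:ℝ) ≤ CC := le_max_left _ _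
  have hCCδ : S.DN ≤ δ * CC := by
    have h1 : S.DN = δ * (S.DN / δ) := by field_simp
    rw [h1]
    exact mul_le_mul_of_nonneg_left (le_max_right _ _) hδ0.le
  refine ⟨S.nnN CC, ⟨?_, ?_, ?_⟩, ?_, ?_, ?_⟩
  · exact fun x y => S.nnN_add_le hCC1 x y
  · exact fun a x => S.nnN_smul hCC1 a x
  · refine ⟨S.whi⁻¹, CC * S.Cup, inv_pos.mpr S.whi_pos, fun x => ⟨?_, ?_⟩⟩
    · have h1 := S.norm_le_NN x
      have h2 := S.NN_le_nnN hCC1 x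
      rw [inv_mul_le_iff₀ S.whi_pos]
      calc ‖x‖ ≤ S.whi * S.NN x := h1
        _ ≤ S.whi * S.nnN CC x := mul_le_mul_of_nonneg_left h2 S.whi_pos.le
    · have h1 := S.nnN_le_CC hCC1 x
      have h2 := S.NN_le x
      have hCC0 : (0:ℝ) ≤ CC := le_trans zero_le_one hCC1
      calc S.nnN CC x ≤ CC * S.NN x := h1
        _ ≤ CC * (S.Cup * ‖x‖) := mul_le_mul_of_nonneg_left h2 hCC0
        _ = CC * S.Cup * ‖x‖ := by ring
  · exact fun i => S.nnN_e hCC1 i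
  · intro s a b hab
    rw [one_mul]
    exact S.nnN_uncond hCC1 s a b hab
  · intro A B hAB
    have h1 := S.nnN_flat_le hCC1 A
    have h2 : S.phi A.card ≤ S.phi B.card := S.phi_mono hAB
    have h3 := S.nnN_flat_ge hCC1 hδ0 hδ1.le hCCδ B
    have h4 : S.phi B.card = (1 + ε) * ((1 - δ) * S.phi B.card) := by
      rw [h1δ]
      field_simp
    calc S.nnN CC (∑ i ∈ A, S.e i) ≤ S.phi A.card := h1
      _ ≤ S.phi B.card := h2
      _ = (1 + ε) * ((1 - δ) * S.phi B.card) := h4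
      _ ≤ (1 + ε) * S.nnN CC (∑ i ∈ B, S.e i) :=
          mul_le_mul_of_nonneg_left h3 hε1.le

end GoodBasis

end Renorm16

/-- if `(e_i)` is an unconditional and democratic Schauder basis of a
Banach space `X`, then for every `ε > 0` there is an equivalent norm on `X` w.r.t. which
`(e_i)` is normalized, `1`-unconditional and `(1+ε)`-democratic. -/
theorem renorming_one_plus_eps_democratic
    {X : Type*} [NormedAddCommGroup X] [NormedSpace ℝ X] [CompleteSpace X]
    (e : ℕ → X) (coord : ℕ → X →L[ℝ] ℝ)
    (hbasis : IsSchauderBasis e coord)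
    (huncond : ∃ K : ℝ, IsUnconditionalWith e (fun x => ‖x‖) K)
    (hdem : ∃ Δ : ℝ, IsDemocraticWith e (fun x => ‖x‖) Δ)
    (ε : ℝ) (hε : 0 < ε) :
    ∃ nn : X → ℝ, IsEquivNorm nn ∧
      IsNormalizedWith e nn ∧
      IsUnconditionalWith e nn 1 ∧
      IsDemocraticWith e nn (1 + ε) := by
  classical
  obtain ⟨K0, hK0⟩ := huncond
  obtain ⟨D0, hD0⟩ := hdem
  set P : ℕ → X →L[ℝ] X := fun n => ∑ i ∈ Finset.range n, (coord i).smulRight (e i) with hP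
  have hPapp : ∀ (n : ℕ) (x : X), P n x = ∑ i ∈ Finset.range n, coord i x • e i := by
    intro n x
    rw [hP]
    simp [ContinuousLinearMap.sum_apply, ContinuousLinearMap.smulRight_apply]
  have hpt : ∀ x : X, ∃ C : ℝ, ∀ n : ℕ, ‖P n x‖ ≤ C := by
    intro x
    have h1 : Filter.Tendsto (fun n => ‖P n x‖) Filter.atTop (nhds ‖x‖) := by
      have h2 := (hbasis.expansion x).norm
      have h3 : (fun n => ‖∑ i ∈ Finset.range n, coord i x • e i‖)
          = fun n => ‖P n x‖ := by
        funext n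
        rw [hPapp]
      rw [h3] at h2
      exact h2
    obtain ⟨C, hC⟩ := h1.bddAbove_range
    exact ⟨C, fun n => hC (Set.mem_range_self n)⟩
  obtain ⟨M0, hM0⟩ := banach_steinhaus hpt
  set S : Renorm16.GoodBasis X :=
    { e := e
      coord := coord
      biorth := hbasis.biorth
      expansion := hbasis.expansion
      K := max K0 1
      oneleK := le_max_right _ _
      unc := fun s a b h =>
        (hK0 s a b h).trans (mul_le_mul_of_nonneg_right (le_max_left _ _) (norm_nonneg _))
      Dm := max D0 1
      oneleD := le_max_right _ _
      dem := fun A B h =>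
        (hD0 A B h).trans (mul_le_mul_of_nonneg_right (le_max_left _ _) (norm_nonneg _))
      M := max M0 0
      Mnonneg := le_max_right _ _
      projBound := fun n x => by
        calc ‖∑ i ∈ Finset.range n, coord i x • e i‖ = ‖P n x‖ := by rw [hPapp]
          _ ≤ ‖P n‖ * ‖x‖ := (P n).le_opNorm x
          _ ≤ max M0 0 * ‖x‖ :=
              mul_le_mul_of_nonneg_right ((hM0 n).trans (le_max_left _ _)) (norm_nonneg _) }
  exact S.main ε hε
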